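/- Fix α>0 and T > 0. Then sup_{n≥0} P(e^R·(h(ρ_n^{(α)}) − R) ∈ [−T,T]) = O(e^{−R}) as R → +∞; that is, there exist constants C > 0 and R_0 such that for all R ≥ R_0 and all n ≥ 0, P(e^R·(h(ρ_n^{(α)}) − R) ∈ [−T,T]) ≤ C·e^{−R}. -/

import Mathlib

open MeasureTheory ProbabilityTheory Filter Real

/-- Auxiliary: from the fact that the density integrates to 1, a uniform
pointwise bound on the density. -/
lemma density_bound_aux
    {Ω : Type*} [MeasureSpace Ω] [IsProbabilityMeasure (ℙ : Measure Ω)]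
    (α : ℝ) (hα : 0 < α)
    (ρ : ℕ → Ω → ℝ) (hρ_meas : ∀ n, Measurable (ρ n))
    (hρ_law : ∀ n : ℕ, (ℙ : Measure Ω).map (ρ n) =
      volume.withDensity (fun r => ENNReal.ofReal
        (Set.indicator (Set.Icc (0 : ℝ) 1)
          (fun r => 2 * (Real.Gamma (α + n + 1) / (Real.Gamma α * Real.Gamma (n + 1))) *
            r ^ (2 * n + 1) * (1 - r ^ 2) ^ (α - 1)) r)))
    (n : ℕ) (r₀ : ℝ) (h0 : 0 ≤ r₀) (h1 : r₀ < 1) :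
    2 * (Real.Gamma (α + n + 1) / (Real.Gamma α * Real.Gamma (n + 1))) *
      r₀ ^ (2 * n + 1) * (1 - r₀ ^ 2) ^ (α - 1)
      ≤ (4 / min 1 ((2:ℝ) ^ (1 - α))) / (1 - r₀ ^ 2) := by
  set c : ℝ := Real.Gamma (α + n + 1) / (Real.Gamma α * Real.Gamma (n + 1)) with hc_def
  have hc : 0 < c := by
    apply div_pos
    · exact Real.Gamma_pos_of_pos (by positivity)
    · exact mul_pos (Real.Gamma_pos_of_pos hα) (Real.Gamma_pos_of_pos (by positivity))
  set cα : ℝ := min 1 ((2:ℝ) ^ (1 - α)) with hcα_def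
  have hcα : 0 < cα := lt_min one_pos (Real.rpow_pos_of_pos two_pos _)
  set t : ℝ := 1 - r₀ ^ 2 with ht_def
  have ht : 0 < t := by nlinarith
  have ht1 : t ≤ 1 := by nlinarith
  set m : ℝ := Real.sqrt ((1 + r₀ ^ 2) / 2) with hm_def
  have hm0 : 0 ≤ m := Real.sqrt_nonneg _
  have hm2 : m ^ 2 = (1 + r₀ ^ 2) / 2 := Real.sq_sqrt (by positivity)
  have hr₀m : r₀ ≤ m := by nlinarith
  have hm1 : m ≤ 1 := by nlinarith
  have hmr : t / 4 ≤ m - r₀ := by nlinarith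
  set L : ℝ := 2 * c * r₀ ^ (2 * n + 1) * (cα * t ^ (α - 1)) with hL_def
  have htα : (0:ℝ) ≤ t ^ (α - 1) := Real.rpow_nonneg ht.le _
  have hL0 : 0 ≤ L := by positivity
  -- pointwise lower bound of the density on [r₀, m]
  have hpt : ∀ r : ℝ, (Set.Icc r₀ m).indicator (fun _ => ENNReal.ofReal L) r ≤
      ENNReal.ofReal (Set.indicator (Set.Icc (0 : ℝ) 1)
        (fun r => 2 * c * r ^ (2 * n + 1) * (1 - r ^ 2) ^ (α - 1)) r) := by
    intro r
    by_cases hr : r ∈ Set.Icc r₀ m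
    · rw [Set.indicator_of_mem hr]
      obtain ⟨hr1, hr2⟩ := hr
      have hr0 : 0 ≤ r := le_trans h0 hr1
      have hr01 : r ∈ Set.Icc (0:ℝ) 1 := ⟨hr0, le_trans hr2 hm1⟩
      rw [Set.indicator_of_mem hr01]
      apply ENNReal.ofReal_le_ofReal
      have hs2 : t / 2 ≤ 1 - r ^ 2 := by nlinarith
      have hs3 : 1 - r ^ 2 ≤ t := by nlinarith
      have hs0 : 0 < 1 - r ^ 2 := lt_of_lt_of_le (by positivity) hs2
      have hpow : r₀ ^ (2 * n + 1) ≤ r ^ (2 * n + 1) := pow_le_pow_left₀ h0 hr1 _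
      have hrp : cα * t ^ (α - 1) ≤ (1 - r ^ 2) ^ (α - 1) := by
        rcases le_or_gt 1 α with hα1 | hα1
        · have h1' : (t / 2) ^ (α - 1) ≤ (1 - r ^ 2) ^ (α - 1) :=
            Real.rpow_le_rpow (by positivity) hs2 (by linarith)
          have h2' : (t / 2) ^ (α - 1) = t ^ (α - 1) * (2:ℝ) ^ (1 - α) := by
            rw [Real.div_rpow ht.le (by norm_num : (0:ℝ) ≤ 2)]
            rw [show (1 - α) = -(α - 1) by ring, Real.rpow_neg (by norm_num : (0:ℝ) ≤ 2)]
            ring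
          calc cα * t ^ (α - 1) ≤ (2:ℝ) ^ (1 - α) * t ^ (α - 1) := by
                apply mul_le_mul_of_nonneg_right (min_le_right _ _) htα
            _ = (t / 2) ^ (α - 1) := by rw [h2']; ring
            _ ≤ (1 - r ^ 2) ^ (α - 1) := h1'
        · have h1' : t ^ (α - 1) ≤ (1 - r ^ 2) ^ (α - 1) :=
            Real.rpow_le_rpow_of_nonpos hs0 hs3 (by linarith)
          calc cα * t ^ (α - 1) ≤ 1 * t ^ (α - 1) := by
                apply mul_le_mul_of_nonneg_right (min_le_left _ _) htα
            _ = t ^ (α - 1) := one_mul _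
            _ ≤ _ := h1'
      calc L = (2 * c * r₀ ^ (2 * n + 1)) * (cα * t ^ (α - 1)) := by rw [hL_def]
        _ ≤ (2 * c * r ^ (2 * n + 1)) * ((1 - r ^ 2) ^ (α - 1)) := by
            apply mul_le_mul _ hrp (by positivity) (by positivity)
            apply mul_le_mul_of_nonneg_left hpow (by positivity)
        _ = 2 * c * r ^ (2 * n + 1) * (1 - r ^ 2) ^ (α - 1) := by ring
    · rw [Set.indicator_of_notMem hr]
      exact zero_le
  -- total mass is 1
  have hprob : IsProbabilityMeasure ((ℙ : Measure Ω).map (ρ n)) :=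
    Measure.isProbabilityMeasure_map (hρ_meas n).aemeasurable
  have htot : (∫⁻ r : ℝ, ENNReal.ofReal (Set.indicator (Set.Icc (0 : ℝ) 1)
      (fun r => 2 * c * r ^ (2 * n + 1) * (1 - r ^ 2) ^ (α - 1)) r)) = 1 := by
    have h1' : ((ℙ : Measure Ω).map (ρ n)) Set.univ = 1 := measure_univ
    rw [hρ_law n, withDensity_apply _ MeasurableSet.univ, Measure.restrict_univ] at h1'
    exact h1'
  have hineq : ENNReal.ofReal L * ENNReal.ofReal (m - r₀) ≤ 1 := by
    calc ENNReal.ofReal L * ENNReal.ofReal (m - r₀)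
        = ENNReal.ofReal L * volume (Set.Icc r₀ m) := by rw [Real.volume_Icc]
      _ = ∫⁻ r : ℝ, (Set.Icc r₀ m).indicator (fun _ => ENNReal.ofReal L) r := by
          rw [lintegral_indicator_const measurableSet_Icc]
      _ ≤ ∫⁻ r : ℝ, ENNReal.ofReal (Set.indicator (Set.Icc (0 : ℝ) 1)
            (fun r => 2 * c * r ^ (2 * n + 1) * (1 - r ^ 2) ^ (α - 1)) r) :=
          lintegral_mono hpt
      _ = 1 := htot
  have hreal : L * (m - r₀) ≤ 1 := by
    have := hineq
    rw [← ENNReal.ofReal_mul hL0] at this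
    exact (ENNReal.ofReal_le_one).mp this
  -- conclude
  have hLt : L * (t / 4) ≤ 1 := le_trans (mul_le_mul_of_nonneg_left hmr hL0) hreal
  have hX : 0 ≤ 2 * c * r₀ ^ (2 * n + 1) * t ^ (α - 1) := by positivity
  rw [div_div]
  rw [le_div_iff₀ (by positivity : (0:ℝ) < cα * t)]
  have : L * (t/4) = (2 * c * r₀ ^ (2 * n + 1) * t ^ (α - 1)) * (cα * t) / 4 := by
    rw [hL_def]; ring
  nlinarith [hLt]

set_option maxHeartbeats 1000000 in
/-- uniform smallness for the hyperbolic ensemble: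
`sup_n P(e^R (h(ρ_n) − R) ∈ [−T, T]) = O(e^{−R})` as `R → +∞`. -/
theorem stmt14
    {Ω : Type*} [MeasureSpace Ω] [IsProbabilityMeasure (ℙ : Measure Ω)]
    (α : ℝ) (hα : 0 < α) (T : ℝ) (hT : 0 < T)
    (ρ : ℕ → Ω → ℝ)
    (hρ_meas : ∀ n, Measurable (ρ n))
    (hρ_range : ∀ n, ∀ ω, ρ n ω ∈ Set.Icc (0 : ℝ) 1)
    (hρ_indep : iIndepFun ρ ℙ)
    (hρ_law : ∀ n : ℕ, (ℙ : Measure Ω).map (ρ n) =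
      volume.withDensity (fun r => ENNReal.ofReal
        (Set.indicator (Set.Icc (0 : ℝ) 1)
          (fun r => 2 * (Real.Gamma (α + n + 1) / (Real.Gamma α * Real.Gamma (n + 1))) *
            r ^ (2 * n + 1) * (1 - r ^ 2) ^ (α - 1)) r)))  :
    ∃ C > (0 : ℝ), ∃ R₀ : ℝ, ∀ R : ℝ, R₀ ≤ R → ∀ n : ℕ,
      (ℙ {ω : Ω | Real.exp R * (Real.log ((1 + ρ n ω) / (1 - ρ n ω)) - R)
          ∈ Set.Icc (-T) T}).toReal ≤ C * Real.exp (-R) := by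
  set cα : ℝ := min 1 ((2:ℝ) ^ (1 - α)) with hcα_def
  have hcα : 0 < cα := lt_min one_pos (Real.rpow_pos_of_pos two_pos _)
  refine ⟨8 * T * Real.exp (2 * T) / cα, by positivity, T + 1, ?_⟩
  intro R hR n
  have hR0 : 0 < R := by linarith
  set δ : ℝ := T * Real.exp (-R) with hδ_def
  have hδ0 : 0 < δ := by positivity
  have hδT : δ ≤ T := by
    have : Real.exp (-R) ≤ 1 := Real.exp_le_one_iff.mpr (by linarith)
    nlinarith
  have hδe : δ * Real.exp R = T := by
    rw [hδ_def, Real.exp_neg]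
    field_simp
  set u : ℝ := Real.exp (R - δ) with hu_def
  set v : ℝ := Real.exp (R + δ) with hv_def
  have hu1 : 1 ≤ u := Real.one_le_exp (by linarith)
  have huv : u ≤ v := Real.exp_le_exp.mpr (by linarith)
  have hu0 : 0 < u := lt_of_lt_of_le one_pos hu1
  have hv0 : 0 < v := lt_of_lt_of_le hu0 huv
  set a : ℝ := (u - 1) / (u + 1) with ha_def
  set b : ℝ := (v - 1) / (v + 1) with hb_def
  have ha0 : 0 ≤ a := div_nonneg (by linarith) (by linarith)
  have hb1 : b < 1 := (div_lt_one (by linarith)).mpr (by linarith)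
  have hab : a ≤ b := by
    rw [ha_def, hb_def, div_le_div_iff₀ (by linarith) (by linarith)]
    nlinarith
  have hb0 : 0 ≤ b := le_trans ha0 hab
  have hb2 : 0 < 1 - b ^ 2 := by nlinarith
  set S : Set ℝ := {r : ℝ | Real.exp R * (Real.log ((1 + r) / (1 - r)) - R)
      ∈ Set.Icc (-T) T} with hS_def
  have hSm : MeasurableSet S := by
    have hm : Measurable fun r : ℝ => Real.exp R * (Real.log ((1 + r) / (1 - r)) - R) :=
      measurable_const.mul ((Real.measurable_log.comp
        ((measurable_const.add measurable_id).div (measurable_const.sub measurable_id))).sub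
        measurable_const)
    exact hm measurableSet_Icc
  have hev : {ω : Ω | Real.exp R * (Real.log ((1 + ρ n ω) / (1 - ρ n ω)) - R)
      ∈ Set.Icc (-T) T} = ρ n ⁻¹' S := rfl
  set K : ℝ := (4 / cα) / (1 - b ^ 2) with hK_def
  have hK0 : 0 ≤ K := by positivity
  set f : ℝ → ENNReal := fun r => ENNReal.ofReal
      (Set.indicator (Set.Icc (0 : ℝ) 1)
        (fun r => 2 * (Real.Gamma (α + n + 1) / (Real.Gamma α * Real.Gamma (n + 1))) *
          r ^ (2 * n + 1) * (1 - r ^ 2) ^ (α - 1)) r) with hf_def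
  -- pointwise bound of the restricted density
  have hpt : ∀ r : ℝ, S.indicator f r ≤
      (Set.Icc a b).indicator (fun _ => ENNReal.ofReal K) r := by
    intro r
    by_cases hrS : r ∈ S
    · rw [Set.indicator_of_mem hrS]
      by_cases hr01 : r ∈ Set.Icc (0:ℝ) 1
      · obtain ⟨hr0, hr1⟩ := hr01
        obtain ⟨hm1, hm2⟩ := hrS
        have hrne : r ≠ 1 := by
          intro h
          subst h
          simp only [sub_self, div_zero, Real.log_zero] at hm1
          have he : R + 1 ≤ Real.exp R := Real.add_one_le_exp R
          nlinarith
        have hr1' : r < 1 := lt_of_le_of_ne hr1 hrne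
        have hq : 0 < (1 + r) / (1 - r) := by
          apply div_pos <;> linarith
        have hflow : R - δ ≤ Real.log ((1 + r) / (1 - r)) := by
          have h' : Real.exp R * (-δ) ≤ Real.exp R * (Real.log ((1 + r) / (1 - r)) - R) := by
            have : Real.exp R * (-δ) = -T := by rw [← hδe]; ring
            rw [this]; exact hm1
          have := le_of_mul_le_mul_left h' (Real.exp_pos R)
          linarith
        have hfhigh : Real.log ((1 + r) / (1 - r)) ≤ R + δ := by
          have h' : Real.exp R * (Real.log ((1 + r) / (1 - r)) - R) ≤ Real.exp R * δ := by
            have : Real.exp R * δ = T := by rw [← hδe]; ring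
            rw [this]; exact hm2
          have := le_of_mul_le_mul_left h' (Real.exp_pos R)
          linarith
        have hqu : u ≤ (1 + r) / (1 - r) := by
          calc u = Real.exp (R - δ) := rfl
            _ ≤ Real.exp (Real.log ((1 + r) / (1 - r))) := Real.exp_le_exp.mpr hflow
            _ = (1 + r) / (1 - r) := Real.exp_log hq
        have hqv : (1 + r) / (1 - r) ≤ v := by
          calc (1 + r) / (1 - r) = Real.exp (Real.log ((1 + r) / (1 - r))) :=
              (Real.exp_log hq).symm
            _ ≤ Real.exp (R + δ) := Real.exp_le_exp.mpr hfhigh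
        have hqu' : u * (1 - r) ≤ 1 + r := by
          have h1r : (0:ℝ) < 1 - r := by linarith
          calc u * (1 - r) ≤ ((1 + r) / (1 - r)) * (1 - r) :=
              mul_le_mul_of_nonneg_right hqu h1r.le
            _ = 1 + r := by field_simp
        have hqv' : 1 + r ≤ v * (1 - r) := by
          have h1r : (0:ℝ) < 1 - r := by linarith
          calc 1 + r = ((1 + r) / (1 - r)) * (1 - r) := by field_simp
            _ ≤ v * (1 - r) := mul_le_mul_of_nonneg_right hqv h1r.le
        have har : a ≤ r := by
          rw [ha_def, div_le_iff₀ (by linarith)]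
          nlinarith
        have hrb : r ≤ b := by
          rw [hb_def, le_div_iff₀ (by linarith)]
          nlinarith
        have hmemab : r ∈ Set.Icc a b := Set.mem_Icc.mpr ⟨har, hrb⟩
        have hmem01 : r ∈ Set.Icc (0:ℝ) 1 := Set.mem_Icc.mpr ⟨hr0, hr1⟩
        rw [Set.indicator_of_mem hmemab]
        simp only [hf_def]
        apply ENNReal.ofReal_le_ofReal
        rw [Set.indicator_of_mem hmem01]
        have hdb := density_bound_aux α hα ρ hρ_meas hρ_law n r hr0 hr1'
        have hmono : (4 / cα) / (1 - r ^ 2) ≤ K := by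
          rw [hK_def]
          apply div_le_div_of_nonneg_left (by positivity) hb2
          nlinarith
        exact le_trans hdb hmono
      · simp only [hf_def]
        rw [Set.indicator_of_notMem hr01]
        simp
    · rw [Set.indicator_of_notMem hrS]
      exact zero_le
  -- main estimate
  have hmain : (ℙ : Measure Ω) (ρ n ⁻¹' S) ≤ ENNReal.ofReal (K * (b - a)) := by
    calc (ℙ : Measure Ω) (ρ n ⁻¹' S) = ((ℙ : Measure Ω).map (ρ n)) S :=
        (Measure.map_apply (hρ_meas n) hSm).symm
      _ = ∫⁻ r in S, f r := by rw [hρ_law n, withDensity_apply _ hSm]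
      _ = ∫⁻ r, S.indicator f r := (lintegral_indicator hSm f).symm
      _ ≤ ∫⁻ r, (Set.Icc a b).indicator (fun _ => ENNReal.ofReal K) r := lintegral_mono hpt
      _ = ENNReal.ofReal K * volume (Set.Icc a b) := lintegral_indicator_const measurableSet_Icc _
      _ = ENNReal.ofReal K * ENNReal.ofReal (b - a) := by rw [Real.volume_Icc]
      _ = ENNReal.ofReal (K * (b - a)) := (ENNReal.ofReal_mul hK0).symm
  -- the real-number estimate K (b - a) ≤ C e^(-R)
  have hba : b - a ≤ (1 - b ^ 2) * ((v - u) / u) := by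
    have hu1' : (u:ℝ) + 1 ≠ 0 := by linarith
    have hv1' : (v:ℝ) + 1 ≠ 0 := by linarith
    have e1 : b - a = 2 * (v - u) / ((u + 1) * (v + 1)) := by
      rw [ha_def, hb_def]
      field_simp
      ring
    have e2 : 1 - b ^ 2 = 4 * v / ((v + 1) ^ 2) := by
      rw [hb_def]
      field_simp
      ring
    have e3 : (4 * v / ((v + 1) ^ 2)) * ((v - u) / u) = (4 * v * (v - u)) / ((v + 1) ^ 2 * u) :=
      div_mul_div_comm _ _ _ _
    rw [e1, e2, e3, div_le_div_iff₀ (by positivity) (by positivity)]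
    have hvu0 : (0:ℝ) ≤ v - u := by linarith
    have hfac : (0:ℝ) ≤ u * v + 2 * v - u := by nlinarith
    nlinarith [mul_nonneg (mul_nonneg hvu0 (by linarith : (0:ℝ) ≤ v + 1)) hfac]
  have hvu : (v - u) / u = Real.exp (2 * δ) - 1 := by
    have hvu' : v = Real.exp (2 * δ) * u := by
      rw [hu_def, hv_def, ← Real.exp_add]
      congr 1
      ring
    rw [hvu']
    field_simp
  have hexp : Real.exp (2 * δ) - 1 ≤ 2 * δ * Real.exp (2 * T) := by
    have h1 : -(2 * δ) + 1 ≤ Real.exp (-(2 * δ)) := Real.add_one_le_exp _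
    have h2 : Real.exp (-(2 * δ)) * Real.exp (2 * δ) = 1 := by
      rw [← Real.exp_add]; simp
    have h3 : Real.exp (2 * δ) ≤ Real.exp (2 * T) := Real.exp_le_exp.mpr (by linarith)
    nlinarith [Real.exp_pos (2 * δ)]
  have hfinal : K * (b - a) ≤ 8 * T * Real.exp (2 * T) / cα * Real.exp (-R) := by
    have h1 : K * (b - a) ≤ K * ((1 - b ^ 2) * ((v - u) / u)) := by
      apply mul_le_mul_of_nonneg_left hba hK0
    have h2' : K * (1 - b ^ 2) = 4 / cα := by
      rw [hK_def]; exact div_mul_cancel₀ _ (ne_of_gt hb2)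
    have h2 : K * ((1 - b ^ 2) * ((v - u) / u)) = (4 / cα) * ((v - u) / u) := by
      rw [← h2']; ring
    have h3 : (4 / cα) * ((v - u) / u) ≤ (4 / cα) * (2 * δ * Real.exp (2 * T)) := by
      apply mul_le_mul_of_nonneg_left _ (by positivity)
      rw [hvu]; exact hexp
    have h4 : (4 / cα) * (2 * δ * Real.exp (2 * T)) =
        8 * T * Real.exp (2 * T) / cα * Real.exp (-R) := by
      rw [hδ_def]; field_simp; ring
    linarith
  have hKba0 : 0 ≤ K * (b - a) := mul_nonneg hK0 (by linarith)
  have h5 : ((ℙ : Measure Ω) (ρ n ⁻¹' S)).toReal ≤ K * (b - a) := by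
    have h6 := ENNReal.toReal_mono ENNReal.ofReal_ne_top hmain
    rwa [ENNReal.toReal_ofReal hKba0] at h6
  rw [hev]
  exact le_trans h5 hfinal
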